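/- For every real x ≥ 1, the number N₊(x) of positive integers n ≤ x with μ(n) = 1 satisfies N₊(x) = M(√x) − (1/2)·Σ_{i,j=1}^{⌊√x⌋} μ(i)·μ(j)·⌊x/(i·j)⌋ + (1/2)·Σ_{i=1}^{⌊√x⌋} μ(i)·⌊x/i²⌋. -/

import Mathlib

open ArithmeticFunction Finset

noncomputable def Mertens (x : ℝ) : ℤ := ∑ k ∈ Finset.Icc 1 ⌊x⌋₊, moebius k

noncomputable def Nplus (x : ℝ) : ℕ := ((Finset.Icc 1 ⌊x⌋₊).filter (fun n => moebius n = 1)).card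

noncomputable def Nminus (x : ℝ) : ℕ := ((Finset.Icc 1 ⌊x⌋₊).filter (fun n => moebius n = -1)).card

noncomputable def Nzero (x : ℝ) : ℕ := ((Finset.Icc 1 ⌊x⌋₊).filter (fun n => moebius n = 0)).card

noncomputable def Qsf (x : ℝ) : ℕ := ((Finset.Icc 1 ⌊x⌋₊).filter (fun n => moebius n ≠ 0)).card

private lemma sum_div_moebius (m : ℕ) :
    ∑ d ∈ m.divisors, (moebius d : ℤ) = if m = 1 then 1 else 0 := by
  calc ∑ d ∈ m.divisors, (moebius d : ℤ)
      = (moebius * (ArithmeticFunction.zeta : ArithmeticFunction ℕ) : ArithmeticFunction ℤ) m :=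
        (ArithmeticFunction.coe_mul_zeta_apply).symm
    _ = (1 : ArithmeticFunction ℤ) m := by rw [ArithmeticFunction.moebius_mul_coe_zeta]
    _ = _ := ArithmeticFunction.one_apply

private lemma sum_ioc_dvd (m N : ℕ) (hm : 1 ≤ m) (hmN : m ≤ N) :
    ∑ b ∈ Ioc 0 N, (if b ∣ m then (moebius b : ℤ) else 0) = if m = 1 then 1 else 0 := by
  rw [← sum_div_moebius m, ← Finset.sum_filter]
  apply Finset.sum_congr _ (fun _ _ => rfl)
  ext d
  simp only [mem_filter, mem_Ioc, Nat.mem_divisors]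
  constructor
  · rintro ⟨⟨h1, h2⟩, h3⟩; exact ⟨h3, by omega⟩
  · rintro ⟨h1, h2⟩
    exact ⟨⟨Nat.pos_of_dvd_of_pos h1 hm, le_trans (Nat.le_of_dvd hm h1) hmN⟩, h1⟩

private lemma moebInnerSum (a n N : ℕ) (ha : 1 ≤ a) (hn : n ∈ Ioc 0 N) :
    ∑ b ∈ Ioc 0 N, (if a * b ∣ n then (moebius b : ℤ) else 0)
      = if n = a then 1 else 0 := by
  rw [Finset.mem_Ioc] at hn
  by_cases hdvd : a ∣ n
  · obtain ⟨m, rfl⟩ := hdvd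
    have hm : 1 ≤ m := by
      rcases Nat.eq_zero_or_pos m with h | h
      · subst h; omega
      · exact h
    have hmN : m ≤ N := le_trans (Nat.le_mul_of_pos_left m (by omega)) hn.2
    have h1 : ∀ b, (a * b ∣ a * m) ↔ b ∣ m := fun b =>
      mul_dvd_mul_iff_left (by omega : a ≠ 0)
    have h2 : (a * m = a) ↔ m = 1 := by
      constructor
      · intro h; nlinarith
      · intro h; simp [h]
    simp only [h1, h2]
    exact sum_ioc_dvd m N hm hmN
  · rw [Finset.sum_eq_zero, if_neg]
    · rintro rfl
      exact hdvd dvd_rfl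
    · intro b _
      rw [if_neg]
      intro h
      exact hdvd (dvd_trans (dvd_mul_right a b) h)

private lemma core_sum (a N : ℕ) (ha : 1 ≤ a) :
    ∑ n ∈ Ioc 0 N, ∑ b ∈ Ioc 0 N, (if a * b ∣ n then (moebius b : ℤ) else 0)
      = if a ≤ N then 1 else 0 := by
  rw [Finset.sum_congr rfl (fun n hn => moebInnerSum a n N ha hn)]
  rw [Finset.sum_ite_eq' (Ioc 0 N) a (fun _ => (1 : ℤ))]
  have h : a ∈ Ioc 0 N ↔ a ≤ N := by rw [Finset.mem_Ioc]; omega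
  rw [if_congr h rfl rfl]

private lemma div_eq_sum (m N : ℕ) :
    ((N / m : ℕ) : ℤ) = ∑ n ∈ Ioc 0 N, (if m ∣ n then (1 : ℤ) else 0) := by
  rw [Finset.sum_boole, ← Nat.Ioc_filter_dvd_card_eq_div]

private lemma lem3 (N K : ℕ) (hK : K ≤ N) (hbig : N < (K + 1) * (K + 1)) :
    ∑ a ∈ Ioc 0 K, ∑ b ∈ Ioc 0 K,
        (moebius a : ℤ) * moebius b * ((N / (a * b) : ℕ) : ℤ)
      = 2 * (∑ k ∈ Ioc 0 K, (moebius k : ℤ)) - ∑ k ∈ Ioc 0 N, (moebius k : ℤ) := by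
  -- G s t := ∑ n ∑ a∈s ∑ b∈t ite
  set G : Finset ℕ → Finset ℕ → ℤ := fun s t =>
    ∑ n ∈ Ioc 0 N, ∑ a ∈ s, ∑ b ∈ t,
      (if a * b ∣ n then (moebius a : ℤ) * moebius b else 0) with hG
  have hrw : ∑ a ∈ Ioc 0 K, ∑ b ∈ Ioc 0 K,
      (moebius a : ℤ) * moebius b * ((N / (a * b) : ℕ) : ℤ) = G (Ioc 0 K) (Ioc 0 K) := by
    simp only [hG]
    calc ∑ a ∈ Ioc 0 K, ∑ b ∈ Ioc 0 K, (moebius a : ℤ) * moebius b * ((N / (a * b) : ℕ) : ℤ)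
        = ∑ a ∈ Ioc 0 K, ∑ b ∈ Ioc 0 K, ∑ n ∈ Ioc 0 N,
            (if a * b ∣ n then (moebius a : ℤ) * moebius b else 0) := by
          apply Finset.sum_congr rfl; intro a _
          apply Finset.sum_congr rfl; intro b _
          rw [div_eq_sum, Finset.mul_sum]
          apply Finset.sum_congr rfl; intro n _
          split <;> simp
      _ = ∑ a ∈ Ioc 0 K, ∑ n ∈ Ioc 0 N, ∑ b ∈ Ioc 0 K,
            (if a * b ∣ n then (moebius a : ℤ) * moebius b else 0) :=
          Finset.sum_congr rfl (fun a _ => Finset.sum_comm)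
      _ = ∑ n ∈ Ioc 0 N, ∑ a ∈ Ioc 0 K, ∑ b ∈ Ioc 0 K,
            (if a * b ∣ n then (moebius a : ℤ) * moebius b else 0) := Finset.sum_comm
  -- G with full second argument
  have hfull : ∀ s : Finset ℕ, (∀ a ∈ s, 1 ≤ a) → s ⊆ Ioc 0 N →
      G s (Ioc 0 N) = ∑ a ∈ s, (moebius a : ℤ) := by
    intro s hs hsub
    simp only [hG]
    rw [Finset.sum_comm]
    apply Finset.sum_congr rfl; intro a ha
    have h1 : ∀ n b : ℕ, (if a * b ∣ n then (moebius a : ℤ) * moebius b else 0)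
        = moebius a * (if a * b ∣ n then (moebius b : ℤ) else 0) := by
      intro n b; split <;> simp
    simp only [h1, ← Finset.mul_sum]
    rw [core_sum a N (hs a ha)]
    have : a ≤ N := (Finset.mem_Ioc.mp (hsub ha)).2
    simp [this]
  -- split second argument
  have hsplit2 : ∀ s : Finset ℕ, G s (Ioc 0 N) = G s (Ioc 0 K) + G s (Ioc K N) := by
    intro s
    simp only [hG]
    rw [← Finset.sum_add_distrib]
    apply Finset.sum_congr rfl; intro n _
    rw [← Finset.sum_add_distrib]
    apply Finset.sum_congr rfl; intro a _
    exact (Finset.sum_Ioc_consecutive _ (Nat.zero_le K) hK).symm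
  have hsplit1 : ∀ t : Finset ℕ, G (Ioc 0 N) t = G (Ioc 0 K) t + G (Ioc K N) t := by
    intro t
    simp only [hG]
    rw [← Finset.sum_add_distrib]
    apply Finset.sum_congr rfl; intro n _
    exact (Finset.sum_Ioc_consecutive _ (Nat.zero_le K) hK).symm
  have hsym : ∀ s t : Finset ℕ, G s t = G t s := by
    intro s t
    simp only [hG]
    apply Finset.sum_congr rfl; intro n _
    rw [Finset.sum_comm]
    apply Finset.sum_congr rfl; intro b _
    apply Finset.sum_congr rfl; intro a _
    rw [mul_comm a b, mul_comm (moebius a : ℤ) (moebius b : ℤ)]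
  have hzero : G (Ioc K N) (Ioc K N) = 0 := by
    simp only [hG]
    apply Finset.sum_eq_zero; intro n hn
    apply Finset.sum_eq_zero; intro a ha
    apply Finset.sum_eq_zero; intro b hb
    rw [Finset.mem_Ioc] at hn ha hb
    rw [if_neg]
    intro h
    have h1 : a * b ≤ n := Nat.le_of_dvd (by omega) h
    have h2 : (K + 1) * (K + 1) ≤ a * b := Nat.mul_le_mul (by omega) (by omega)
    omega
  have e1 : G (Ioc K N) (Ioc 0 N)
      = ∑ k ∈ Ioc 0 N, (moebius k : ℤ) - ∑ k ∈ Ioc 0 K, (moebius k : ℤ) := by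
    rw [hfull (Ioc K N) (fun a ha => by rw [Finset.mem_Ioc] at ha; omega)
      (Finset.Ioc_subset_Ioc (Nat.zero_le K) le_rfl)]
    have := Finset.sum_Ioc_consecutive (fun k => (moebius k : ℤ)) (Nat.zero_le K) hK
    linarith
  have e2 : G (Ioc 0 N) (Ioc 0 N) = ∑ k ∈ Ioc 0 N, (moebius k : ℤ) :=
    hfull (Ioc 0 N) (fun a ha => by rw [Finset.mem_Ioc] at ha; omega) (subset_rfl)
  have e3 : G (Ioc K N) (Ioc 0 K) = G (Ioc K N) (Ioc 0 N) := by
    rw [hsplit2 (Ioc K N), hzero, add_zero]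
  have e4 : G (Ioc 0 K) (Ioc K N) = G (Ioc K N) (Ioc 0 K) := hsym _ _
  have e5 := hsplit1 (Ioc 0 N)
  rw [hsplit2 (Ioc 0 K), hsplit2 (Ioc K N)] at e5
  rw [hrw]
  rw [e2] at e5
  rw [hzero] at e5
  rw [e4, e3, e1] at e5
  linarith

private lemma sqsum (n N : ℕ) (h1 : 1 ≤ n) (h2 : n ≤ N) :
    ∑ i ∈ Ioc 0 N, (if i * i ∣ n then (moebius i : ℤ) else 0)
      = if Squarefree n then 1 else 0 := by
  obtain ⟨a, b, hab, ha⟩ := Nat.sq_mul_squarefree n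
  have hn0 : n ≠ 0 := by omega
  have hb0 : b ≠ 0 := by rintro rfl; simp at hab; omega
  have ha0 : a ≠ 0 := by rintro rfl; simp at hab; omega
  have hbdvd : b ∣ n := by rw [← hab]; exact Dvd.dvd.mul_right (dvd_pow_self b (by norm_num)) a
  have key : ∀ i : ℕ, 0 < i → (i * i ∣ n ↔ i ∣ b) := by
    intro i hi
    constructor
    · intro hdvd
      have hii : i * i ≠ 0 := by positivity
      rw [← Nat.factorization_le_iff_dvd (by omega) hb0]
      have hle := (Nat.factorization_le_iff_dvd hii hn0).mpr hdvd
      rw [Finsupp.le_def] at hle ⊢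
      intro p
      have h3 := hle p
      rw [Nat.factorization_mul (by omega) (by omega)] at h3
      rw [← hab, Nat.factorization_mul (by positivity) ha0, Nat.factorization_pow] at h3
      have h4 := ha.natFactorization_le_one p
      simp only [Finsupp.add_apply, Finsupp.smul_apply, smul_eq_mul] at h3
      omega
    · intro hdvd
      calc i * i ∣ b * b := mul_dvd_mul hdvd hdvd
        _ = b ^ 2 := (sq b).symm
        _ ∣ n := by rw [← hab]; exact Dvd.dvd.mul_right dvd_rfl a
  have hsq : Squarefree n ↔ b = 1 := by
    constructor
    · intro hsqf
      exact Nat.isUnit_iff.mp (hsqf b ((key b (by omega)).mpr dvd_rfl))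
    · rintro rfl
      rw [← hab]; simpa using ha
  calc ∑ i ∈ Ioc 0 N, (if i * i ∣ n then (moebius i : ℤ) else 0)
      = ∑ i ∈ Ioc 0 N, (if i ∣ b then (moebius i : ℤ) else 0) := by
        apply Finset.sum_congr rfl; intro i hi
        rw [Finset.mem_Ioc] at hi
        rw [if_congr (key i hi.1) rfl rfl]
    _ = if b = 1 then 1 else 0 :=
        sum_ioc_dvd b N (by omega) (le_trans (Nat.le_of_dvd (by omega) hbdvd) h2)
    _ = if Squarefree n then 1 else 0 := by rw [if_congr hsq.symm rfl rfl]

private lemma lem2 (N K : ℕ) (hK : K ≤ N) (hbig : N < (K + 1) * (K + 1)) :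
    ∑ i ∈ Ioc 0 K, (moebius i : ℤ) * ((N / (i * i) : ℕ) : ℤ)
      = ∑ n ∈ Ioc 0 N, (if Squarefree n then (1 : ℤ) else 0) := by
  calc ∑ i ∈ Ioc 0 K, (moebius i : ℤ) * ((N / (i * i) : ℕ) : ℤ)
      = ∑ i ∈ Ioc 0 K, ∑ n ∈ Ioc 0 N, (if i * i ∣ n then (moebius i : ℤ) else 0) := by
        apply Finset.sum_congr rfl; intro i _
        rw [div_eq_sum, Finset.mul_sum]
        apply Finset.sum_congr rfl; intro n _
        split <;> simp
    _ = ∑ i ∈ Ioc 0 N, ∑ n ∈ Ioc 0 N, (if i * i ∣ n then (moebius i : ℤ) else 0) := by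
        rw [← Finset.sum_Ioc_consecutive _ (Nat.zero_le K) hK]
        have : ∑ i ∈ Ioc K N, ∑ n ∈ Ioc 0 N, (if i * i ∣ n then (moebius i : ℤ) else 0) = 0 := by
          apply Finset.sum_eq_zero; intro i hi
          apply Finset.sum_eq_zero; intro n hn
          rw [Finset.mem_Ioc] at hi hn
          rw [if_neg]
          intro h
          have h1 : i * i ≤ n := Nat.le_of_dvd (by omega) h
          have h2 : (K + 1) * (K + 1) ≤ i * i := Nat.mul_le_mul (by omega) (by omega)
          omega
        rw [this, add_zero]
    _ = ∑ n ∈ Ioc 0 N, ∑ i ∈ Ioc 0 N, (if i * i ∣ n then (moebius i : ℤ) else 0) :=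
        Finset.sum_comm
    _ = ∑ n ∈ Ioc 0 N, (if Squarefree n then (1 : ℤ) else 0) := by
        apply Finset.sum_congr rfl; intro n hn
        rw [Finset.mem_Ioc] at hn
        exact sqsum n N hn.1 hn.2

private lemma moebius_tri (n : ℕ) :
    (moebius n : ℤ) = 0 ∨ (moebius n : ℤ) = 1 ∨ (moebius n : ℤ) = -1 := by
  by_cases h : Squarefree n
  · rw [ArithmeticFunction.moebius_apply_of_squarefree h]
    rcases Nat.even_or_odd (ArithmeticFunction.cardFactors n) with he | ho
    · right; left; exact he.neg_one_pow
    · right; right; exact ho.neg_one_pow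
  · left; exact ArithmeticFunction.moebius_eq_zero_of_not_squarefree h

private lemma moebius_split (n : ℕ) :
    (moebius n : ℤ) = (if moebius n = 1 then (1 : ℤ) else 0)
      - (if moebius n = -1 then (1 : ℤ) else 0) := by
  rcases moebius_tri n with h | h | h <;> rw [h] <;> norm_num

private lemma sqfree_split (n : ℕ) (hn : n ≠ 0) :
    (if Squarefree n then (1 : ℤ) else 0)
      = (if moebius n = 1 then (1 : ℤ) else 0) + (if moebius n = -1 then (1 : ℤ) else 0) := by
  by_cases h : Squarefree n
  · rw [if_pos h]
    have h0 : moebius n ≠ 0 := ArithmeticFunction.moebius_ne_zero_iff_squarefree.mpr h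
    rcases moebius_tri n with h1 | h1 | h1
    · exact absurd h1 h0
    · simp [h1]
    · simp [h1]
  · rw [if_neg h]
    have h0 : moebius n = 0 := ArithmeticFunction.moebius_eq_zero_of_not_squarefree h
    simp [h0]

private lemma floor_div_nat' (x : ℝ) (hx : 0 ≤ x) (m : ℕ) :
    ⌊x / (m : ℝ)⌋ = ((⌊x⌋₊ / m : ℕ) : ℤ) := by
  rw [← Nat.floor_div_natCast x m, Int.natCast_floor_eq_floor (by positivity)]

theorem stmt6 (x : ℝ) (hx : 1 ≤ x) :
    (Nplus x : ℚ) = (Mertens (Real.sqrt x) : ℚ) -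
      (1 / 2) * ∑ i ∈ Finset.Icc 1 ⌊Real.sqrt x⌋₊, ∑ j ∈ Finset.Icc 1 ⌊Real.sqrt x⌋₊,
        (moebius i * moebius j * ⌊x / (i * j : ℝ)⌋ : ℚ) +
      (1 / 2) * ∑ i ∈ Finset.Icc 1 ⌊Real.sqrt x⌋₊, (moebius i * ⌊x / (i ^ 2 : ℝ)⌋ : ℚ) := by
  have hx0 : (0 : ℝ) ≤ x := by linarith
  set N := ⌊x⌋₊ with hN
  set K := ⌊Real.sqrt x⌋₊ with hKdef
  have hN1 : 1 ≤ N := Nat.one_le_floor_iff x |>.mpr hx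
  have hsqx : Real.sqrt x ≤ x := by
    nlinarith [Real.sq_sqrt hx0, Real.one_le_sqrt.mpr hx]
  have hK : K ≤ N := Nat.floor_le_floor hsqx
  have hbig : N < (K + 1) * (K + 1) := by
    have h1 : Real.sqrt x < (K : ℝ) + 1 := Nat.lt_floor_add_one _
    have h2 : x < ((K : ℝ) + 1) * ((K : ℝ) + 1) := by
      nlinarith [Real.sq_sqrt hx0, Real.sqrt_nonneg x]
    have h3 : (N : ℝ) ≤ x := Nat.floor_le hx0
    have : (N : ℝ) < (((K + 1) * (K + 1) : ℕ) : ℝ) := by push_cast; linarith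
    exact_mod_cast this
  have hIcc : ∀ M : ℕ, Finset.Icc 1 M = Finset.Ioc 0 M := fun M => Finset.Icc_add_one_left_eq_Ioc 0 M
  -- floor rewrites
  have hD : ∑ i ∈ Finset.Icc 1 K, ∑ j ∈ Finset.Icc 1 K,
      (moebius i * moebius j * ⌊x / (i * j : ℝ)⌋ : ℚ)
      = ((∑ a ∈ Ioc 0 K, ∑ b ∈ Ioc 0 K,
          (moebius a : ℤ) * moebius b * ((N / (a * b) : ℕ) : ℤ) : ℤ) : ℚ) := by
    rw [hIcc]
    push_cast
    apply Finset.sum_congr rfl; intro a _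
    apply Finset.sum_congr rfl; intro b _
    have : ⌊x / ((a : ℝ) * b)⌋ = ((N / (a * b) : ℕ) : ℤ) := by
      rw [show ((a : ℝ) * b) = ((a * b : ℕ) : ℝ) by push_cast; ring]
      exact floor_div_nat' x hx0 (a * b)
    rw [this]
    push_cast
    ring
  have hS : ∑ i ∈ Finset.Icc 1 K, (moebius i * ⌊x / (i ^ 2 : ℝ)⌋ : ℚ)
      = ((∑ i ∈ Ioc 0 K, (moebius i : ℤ) * ((N / (i * i) : ℕ) : ℤ) : ℤ) : ℚ) := by
    rw [hIcc]
    push_cast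
    apply Finset.sum_congr rfl; intro i _
    have : ⌊x / ((i : ℝ) ^ 2)⌋ = ((N / (i * i) : ℕ) : ℤ) := by
      rw [show ((i : ℝ) ^ 2) = ((i * i : ℕ) : ℝ) by push_cast; ring]
      exact floor_div_nat' x hx0 (i * i)
    rw [this]
    push_cast
    ring
  -- cardinalities
  set P := ((Ioc 0 N).filter (fun n => moebius n = 1)).card with hP
  set Q := ((Ioc 0 N).filter (fun n => moebius n = -1)).card with hQ
  have hNp : Nplus x = P := by rw [Nplus, hP, hIcc]
  have hMN : ∑ k ∈ Ioc 0 N, (moebius k : ℤ) = (P : ℤ) - Q := by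
    rw [hP, hQ]
    rw [Finset.sum_congr rfl (fun n _ => moebius_split n), Finset.sum_sub_distrib]
    rw [Finset.sum_boole, Finset.sum_boole]
  have hSq : ∑ n ∈ Ioc 0 N, (if Squarefree n then (1 : ℤ) else 0) = (P : ℤ) + Q := by
    rw [hP, hQ]
    rw [Finset.sum_congr rfl (fun n hn =>
      sqfree_split n (by rw [Finset.mem_Ioc] at hn; omega)), Finset.sum_add_distrib]
    rw [Finset.sum_boole, Finset.sum_boole]
  have h3 := lem3 N K hK hbig
  have h2 := lem2 N K hK hbig
  rw [hMN] at h3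
  rw [hSq] at h2
  have hMert : (Mertens (Real.sqrt x) : ℤ) = ∑ k ∈ Ioc 0 K, (moebius k : ℤ) := by
    rw [Mertens, hIcc]
  rw [hNp, hD, hS, hMert, h3, h2]
  push_cast
  ring
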